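/- arXiv:2306.10966 — 6 statements merged into one kernel-verified Lean document; each statement's English description precedes it below -/
import Mathlib

section
/- Define S(z) = a e^z + (1/2) e^{2āz} + ā - z⁻¹(e^z - 1) for z ≠ 0, where a = (1/4)(1 - i/√3) and ā = (1/4)(1 + i/√3). Then for all real z with z ≥ 0, |S(z)| ≤ z³ e^z. -/
noncomputable def a : ℂ := (1/4) * (1 - Complex.I / Real.sqrt 3)
noncomputable def abar : ℂ := (1/4) * (1 + Complex.I / Real.sqrt 3)

/-- The defect function `S`, defined by the formula for `z ≠ 0` and extended
continuously by `S 0 = 0` (consistent with its Taylor series starting at `z³`). -/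
noncomputable def S (z : ℂ) : ℂ :=
  if z = 0 then 0 else
    a * Complex.exp z + (1/2) * Complex.exp (2 * abar * z) + abar
      - z⁻¹ * (Complex.exp z - 1)

open Complex Finset in
lemma exp_tail_bound (w : ℂ) (n : ℕ) :
    ‖Complex.exp w - ∑ k ∈ Finset.range n, w ^ k / k.factorial‖
      ≤ ‖w‖ ^ n / n.factorial * Real.exp (‖w‖) := by
  have hnorm : ∀ k : ℕ, ‖w ^ k / (k.factorial : ℂ)‖ = ‖w‖ ^ k / k.factorial := by
    intro k
    rw [norm_div, norm_pow]
    simp [Complex.norm_natCast]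
  have hsumnorm : Summable fun k : ℕ => ‖w‖ ^ k / k.factorial :=
    Real.summable_pow_div_factorial _
  have hsum : Summable fun k : ℕ => w ^ k / (k.factorial : ℂ) := by
    apply Summable.of_norm
    simpa only [hnorm] using hsumnorm
  have hexp : Complex.exp w = ∑' k : ℕ, w ^ k / (k.factorial : ℂ) := by
    rw [Complex.exp_eq_exp_ℂ, NormedSpace.exp_eq_tsum_div]
  have hkey : Complex.exp w - ∑ k ∈ Finset.range n, w ^ k / k.factorial
      = ∑' k : ℕ, w ^ (k + n) / ((k + n).factorial : ℂ) := by
    rw [hexp]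
    rw [sub_eq_iff_eq_add']
    exact (hsum.sum_add_tsum_nat_add n).symm
  rw [hkey]
  have h1 : ‖∑' k : ℕ, w ^ (k + n) / ((k + n).factorial : ℂ)‖
      ≤ ∑' k : ℕ, ‖w‖ ^ (k + n) / ((k + n).factorial) := by
    have := norm_tsum_le_tsum_norm (f := fun k : ℕ => w ^ (k + n) / ((k + n).factorial : ℂ)) ?_
    · simpa only [hnorm] using this
    · simpa only [hnorm, Function.comp_def] using hsumnorm.comp_injective (add_left_injective n)
  refine h1.trans ?_
  have h2 : ∀ k : ℕ, ‖w‖ ^ (k + n) / ((k + n).factorial : ℝ)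
      ≤ ‖w‖ ^ n / n.factorial * (‖w‖ ^ k / k.factorial) := by
    intro k
    rw [pow_add, mul_comm (‖w‖ ^ k), div_mul_div_comm]
    apply div_le_div_of_nonneg_left
    · positivity
    · positivity
    · exact_mod_cast Nat.le_of_dvd (Nat.factorial_pos _)
        (by simpa [mul_comm] using Nat.factorial_mul_factorial_dvd_factorial_add k n)
  calc ∑' k : ℕ, ‖w‖ ^ (k + n) / ((k + n).factorial : ℝ)
      ≤ ∑' k : ℕ, ‖w‖ ^ n / n.factorial * (‖w‖ ^ k / k.factorial) := by
        exact Summable.tsum_le_tsum h2 (hsumnorm.comp_injective (add_left_injective n))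
          (hsumnorm.mul_left _)
    _ = ‖w‖ ^ n / n.factorial * Real.exp (‖w‖) := by
        rw [tsum_mul_left]
        congr 1
        rw [Real.exp_eq_exp_ℝ, NormedSpace.exp_eq_tsum_div]

theorem stmt4 : ∀ z : ℝ, 0 ≤ z → ‖S z‖ ≤ z ^ 3 * Real.exp z := by
  intro z hz
  rcases eq_or_lt_of_le hz with h0 | hzpos
  · rw [← h0]
    simp [S]
  have hzne : (z : ℂ) ≠ 0 := by exact_mod_cast hzpos.ne'
  -- basic facts about a and abar
  have hs3 : (Real.sqrt 3 : ℂ) ^ 2 = 3 := by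
    norm_cast
    rw [Real.sq_sqrt]; norm_num
  have hsne : (Real.sqrt 3 : ℂ) ≠ 0 := by
    intro h
    rw [h] at hs3; norm_num at hs3
  have habs_a : ‖a‖ ≤ 1/2 := by
    have : ‖a‖ ^ 2 = 1/12 := by
      rw [Complex.sq_norm, Complex.normSq_apply]
      simp [a, Complex.div_re, Complex.div_im, Complex.normSq_apply]
      have : Real.sqrt 3 ^ 2 = 3 := by rw [Real.sq_sqrt]; norm_num
      nlinarith [Real.sqrt_nonneg 3, this]
    nlinarith [norm_nonneg a]
  have habs_abar : ‖abar‖ ≤ 1/2 := by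
    have : ‖abar‖ ^ 2 = 1/12 := by
      rw [Complex.sq_norm, Complex.normSq_apply]
      simp [abar, Complex.div_re, Complex.div_im, Complex.normSq_apply]
      have : Real.sqrt 3 ^ 2 = 3 := by rw [Real.sq_sqrt]; norm_num
      nlinarith [Real.sqrt_nonneg 3, this]
    nlinarith [norm_nonneg abar]
  -- key algebraic identity
  set E : ℂ := Complex.exp z - ∑ k ∈ Finset.range 3, (z : ℂ) ^ k / k.factorial with hE
  set F : ℂ := Complex.exp (2 * abar * z)
      - ∑ k ∈ Finset.range 3, (2 * abar * z) ^ k / k.factorial with hF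
  set G : ℂ := Complex.exp z - ∑ k ∈ Finset.range 4, (z : ℂ) ^ k / k.factorial with hG
  have habar2 : abar = 1/2 - a := by
    simp only [a, abar]; ring
  have hinv3 : ((Real.sqrt 3 : ℂ))⁻¹ ^ 2 = 1/3 := by
    rw [inv_pow, hs3]; norm_num
  have ha2 : a ^ 2 = a / 2 - 1/12 := by
    simp only [a]
    linear_combination (((Real.sqrt 3:ℂ))⁻¹^2/16) * Complex.I_sq - (1/16 : ℂ) * hinv3
  have hiden : S z = a * E + (1/2) * F - (z : ℂ)⁻¹ * G := by
    rw [S, if_neg hzne, hE, hF, hG]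
    norm_num [Finset.sum_range_succ, Nat.factorial]
    rw [habar2]
    field_simp
    linear_combination (24 * (z:ℂ)^3) * ha2
  -- bounds on each piece
  have habsz : ‖(z : ℂ)‖ = z := by
    rw [Complex.norm_real, Real.norm_of_nonneg hz]
  have hEb : ‖E‖ ≤ z ^ 3 / 6 * Real.exp z := by
    have := exp_tail_bound (z : ℂ) 3
    rw [habsz] at this
    norm_num [Nat.factorial] at this
    exact this
  have hGb : ‖G‖ ≤ z ^ 4 / 24 * Real.exp z := by
    have := exp_tail_bound (z : ℂ) 4
    rw [habsz] at this
    norm_num [Nat.factorial] at this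
    exact this
  have habsw : ‖2 * abar * z‖ ≤ z := by
    rw [norm_mul, norm_mul, habsz, Complex.norm_two]
    nlinarith
  have hFb : ‖F‖ ≤ z ^ 3 / 6 * Real.exp z := by
    have h := exp_tail_bound (2 * abar * z) 3
    rw [show ((Nat.factorial 3 : ℕ) : ℝ) = 6 by norm_num [Nat.factorial]] at h
    refine h.trans ?_
    have h1 : ‖2 * abar * z‖ ^ 3 ≤ z ^ 3 := by
      apply pow_le_pow_left₀ (norm_nonneg _) habsw
    have h2 : Real.exp (‖2 * abar * z‖) ≤ Real.exp z :=
      Real.exp_le_exp.mpr habsw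
    have hexppos : (0:ℝ) < Real.exp (‖2 * abar * z‖) := Real.exp_pos _
    have : (0:ℝ) ≤ ‖2 * abar * z‖ ^ 3 := by positivity
    calc ‖2 * abar * z‖ ^ 3 / 6 * Real.exp (‖2 * abar * z‖)
        ≤ z ^ 3 / 6 * Real.exp (‖2 * abar * z‖) := by
          apply mul_le_mul_of_nonneg_right _ hexppos.le
          linarith
      _ ≤ z ^ 3 / 6 * Real.exp z := by
          apply mul_le_mul_of_nonneg_left h2
          positivity
  -- put together
  rw [hiden]
  have hinv : ‖(z : ℂ)⁻¹‖ = z⁻¹ := by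
    rw [norm_inv, habsz]
  calc ‖a * E + (1/2) * F - (z : ℂ)⁻¹ * G‖
      ≤ ‖a * E‖ + ‖(1/2 : ℂ) * F‖ + ‖(z : ℂ)⁻¹ * G‖ := by
        refine (norm_sub_le _ _).trans ?_
        have := norm_add_le (a * E) ((1/2 : ℂ) * F)
        linarith
    _ = ‖a‖ * ‖E‖ + 1/2 * ‖F‖ + z⁻¹ * ‖G‖ := by
        rw [norm_mul, norm_mul, norm_mul, hinv]
        norm_num
    _ ≤ 1/2 * (z ^ 3 / 6 * Real.exp z) + 1/2 * (z ^ 3 / 6 * Real.exp z)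
        + z⁻¹ * (z ^ 4 / 24 * Real.exp z) := by
        gcongr
    _ ≤ z ^ 3 * Real.exp z := by
        rw [(by field_simp : z⁻¹ * (z ^ 4 / 24 * Real.exp z) = z ^ 3 / 24 * Real.exp z)]
        nlinarith [Real.exp_pos z, pow_pos hzpos 3]
end

section
/- Define S(z) = a e^z + (1/2) e^{2āz} + ā - z⁻¹(e^z - 1) with a = (1/4)(1 - i/√3), ā = (1/4)(1 + i/√3). Then for all real z with -1 < z < 0, |S(z)| ≤ |z|³ e^z. -/
noncomputable def cc (k : ℕ) : ℂ :=
  (if k = 0 then a else 0) + (1/2) * (-2*a)^k / k.factorial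
    + abar * (-1)^k / k.factorial + (-1)^(k+1) / (k+1).factorial

lemma hsqrt3 : ((Real.sqrt 3 : ℝ) : ℂ)^2 = 3 := by
  rw [← Complex.ofReal_pow, Real.sq_sqrt (by norm_num)]; norm_num

lemma hsqrt3_ne : ((Real.sqrt 3 : ℝ) : ℂ) ≠ 0 := by
  intro h; have := hsqrt3; rw [h] at this; norm_num at this

lemma hinv3 : (((Real.sqrt 3 : ℝ) : ℂ))⁻¹ ^ 2 = 1/3 := by
  rw [inv_pow, hsqrt3]; norm_num

lemma cc0 : cc 0 = 0 := by unfold cc a abar; norm_num; ring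
lemma cc1 : cc 1 = 0 := by unfold cc a abar; norm_num [Nat.factorial]; ring
lemma cc2 : cc 2 = 0 := by
  unfold cc a abar
  norm_num [Nat.factorial]
  linear_combination (Complex.I^2/16) * hinv3 + (1/48) * Complex.I_sq

lemma sqrt3_ge : (5/3 : ℝ) ≤ Real.sqrt 3 := by
  rw [show (5/3:ℝ) = Real.sqrt ((5/3)^2) from (Real.sqrt_sq (by norm_num)).symm]
  apply Real.sqrt_le_sqrt; norm_num

lemma norm_Idiv : ‖Complex.I / (Real.sqrt 3 : ℂ)‖ ≤ 3/5 := by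
  rw [norm_div, Complex.norm_I]
  have h1 : ‖((Real.sqrt 3 : ℝ) : ℂ)‖ = Real.sqrt 3 := by
    rw [Complex.norm_real, Real.norm_eq_abs, abs_of_nonneg (Real.sqrt_nonneg 3)]
  rw [h1, div_le_iff₀ (by linarith [sqrt3_ge])]
  nlinarith [sqrt3_ge]

lemma norm_a_le : ‖a‖ ≤ 2/5 := by
  unfold a
  calc ‖(1/4 : ℂ) * (1 - Complex.I / Real.sqrt 3)‖
      = (1/4) * ‖(1:ℂ) - Complex.I / Real.sqrt 3‖ := by
        rw [norm_mul]; norm_num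
    _ ≤ (1/4) * (‖(1:ℂ)‖ + ‖Complex.I / (Real.sqrt 3:ℂ)‖) := by
        gcongr; exact norm_sub_le _ _
    _ ≤ (1/4) * (1 + 3/5) := by
        gcongr
        · rw [norm_one]
        · exact norm_Idiv
    _ = 2/5 := by norm_num

lemma norm_abar_le : ‖abar‖ ≤ 2/5 := by
  unfold abar
  calc ‖(1/4 : ℂ) * (1 + Complex.I / Real.sqrt 3)‖
      = (1/4) * ‖(1:ℂ) + Complex.I / Real.sqrt 3‖ := by
        rw [norm_mul]; norm_num
    _ ≤ (1/4) * (‖(1:ℂ)‖ + ‖Complex.I / (Real.sqrt 3:ℂ)‖) := by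
        gcongr; exact norm_add_le _ _
    _ ≤ (1/4) * (1 + 3/5) := by
        gcongr
        · rw [norm_one]
        · exact norm_Idiv
    _ = 2/5 := by norm_num

lemma cc_norm_le (k : ℕ) (hk : 3 ≤ k) : ‖cc k‖ ≤ (k.factorial : ℝ)⁻¹ := by
  have hk0 : k ≠ 0 := by omega
  have hfpos : (0:ℝ) < k.factorial := by positivity
  have h1 : ‖(1/2 : ℂ) * (-2*a)^k / k.factorial‖ ≤ (1/2) * (4/5)^3 / k.factorial := by
    rw [norm_div, norm_mul, norm_pow]
    have hn : ‖(-2*a : ℂ)‖ ≤ 4/5 := by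
      rw [show (-2*a : ℂ) = (-2) * a by ring, norm_mul]
      have : ‖(-2 : ℂ)‖ = 2 := by simp
      rw [this]; linarith [norm_a_le]
    have hpow : ‖(-2*a : ℂ)‖^k ≤ (4/5)^3 := by
      calc ‖(-2*a : ℂ)‖^k ≤ (4/5 : ℝ)^k := by
            apply pow_le_pow_left₀ (norm_nonneg _) hn
        _ ≤ (4/5)^3 := by
            apply pow_le_pow_of_le_one (by norm_num) (by norm_num) hk
    have hnf : ‖((k.factorial : ℕ) : ℂ)‖ = (k.factorial : ℝ) := by
      rw [show ((k.factorial : ℕ) : ℂ) = ((k.factorial : ℝ) : ℂ) by push_cast; ring,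
        Complex.norm_real, Real.norm_eq_abs, abs_of_pos hfpos]
    rw [hnf]
    apply (div_le_div_iff_of_pos_right hfpos).mpr
    have : ‖(1/2 : ℂ)‖ = 1/2 := by norm_num
    rw [this]
    nlinarith [hpow, norm_nonneg ((-2*a : ℂ))]
  have h2 : ‖abar * (-1:ℂ)^k / k.factorial‖ ≤ (2/5) / k.factorial := by
    rw [norm_div, norm_mul, norm_pow, norm_neg, norm_one, one_pow, mul_one,
      RCLike.norm_natCast]
    apply (div_le_div_iff_of_pos_right hfpos).mpr norm_abar_le
  have h3 : ‖((-1:ℂ))^(k+1) / (k+1).factorial‖ ≤ (1/4) / k.factorial := by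
    rw [norm_div, norm_pow, norm_neg, norm_one, one_pow, RCLike.norm_natCast]
    rw [div_le_div_iff₀ (by positivity) hfpos]
    have : (4:ℝ) * k.factorial ≤ ((k+1).factorial : ℝ) := by
      rw [Nat.factorial_succ]
      push_cast
      have : (4:ℝ) ≤ (k:ℝ) + 1 := by
        have : (3:ℝ) ≤ (k:ℝ) := by exact_mod_cast hk
        linarith
      nlinarith [hfpos]
    linarith
  have hsplit : cc k = (1/2 : ℂ) * (-2*a)^k / k.factorial
      + abar * (-1)^k / k.factorial + (-1)^(k+1) / (k+1).factorial := by
    unfold cc; rw [if_neg hk0, zero_add]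
  rw [hsplit]
  calc ‖(1/2 : ℂ) * (-2*a)^k / k.factorial + abar * (-1)^k / k.factorial
        + (-1)^(k+1) / (k+1).factorial‖
      ≤ ‖(1/2 : ℂ) * (-2*a)^k / k.factorial‖ + ‖abar * (-1:ℂ)^k / k.factorial‖
        + ‖((-1:ℂ))^(k+1) / (k+1).factorial‖ := norm_add₃_le
    _ ≤ (1/2) * (4/5)^3 / k.factorial + (2/5) / k.factorial + (1/4) / k.factorial := by
        gcongr
    _ ≤ (k.factorial : ℝ)⁻¹ := by
        rw [inv_eq_one_div]
        rw [← add_div, ← add_div, div_le_div_iff₀ hfpos hfpos]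
        nlinarith [hfpos]

lemma fact_geom (k : ℕ) (hk : 3 ≤ k) :
    ((k.factorial : ℝ))⁻¹ ≤ (32/3) * (1/4)^k := by
  induction k, hk using Nat.le_induction with
  | base => norm_num [Nat.factorial]
  | succ n hn ih =>
    have hfpos : (0:ℝ) < n.factorial := by positivity
    have h4 : (4:ℝ) ≤ (n:ℝ) + 1 := by
      have : (3:ℝ) ≤ (n:ℝ) := by exact_mod_cast hn
      linarith
    rw [Nat.factorial_succ]
    push_cast
    rw [mul_inv]
    calc ((n:ℝ)+1)⁻¹ * ((n.factorial:ℝ))⁻¹ ≤ (1/4) * ((32/3) * (1/4)^n) := by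
          apply mul_le_mul _ ih (by positivity) (by norm_num)
          rw [inv_le_comm₀ (by linarith) (by norm_num)]
          linarith
      _ = (32/3) * (1/4)^(n+1) := by ring

lemma exp_tsum (x : ℂ) : Complex.exp x = ∑' n : ℕ, x^n / n.factorial := by
  rw [Complex.exp_eq_exp_ℂ, NormedSpace.exp_eq_tsum_div]

section series

variable (w : ℂ)

lemma hterm (k : ℕ) : cc k * w^k =
    (if k = 0 then a else 0) + ((1/2:ℂ) * ((-2*a*w)^k / k.factorial)
      + (abar * ((-w)^k / k.factorial) + (-1:ℂ)^(k+1) * w^k / (k+1).factorial)) := by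
  by_cases hk : k = 0
  · subst hk
    simp only [cc, if_pos rfl, pow_zero, mul_one]
    norm_num [Nat.factorial]
    ring
  · simp only [cc, if_neg hk, zero_add]
    have e1 : (-2*a*w)^k = (-2*a)^k * w^k := by rw [mul_pow]
    have e2 : (-w : ℂ)^k = (-1:ℂ)^k * w^k := by rw [neg_pow]
    rw [e1, e2]
    ring

lemma s0 : Summable (fun k : ℕ => if k = 0 then a else (0:ℂ)) := by
  apply summable_of_ne_finset_zero (s := {0})
  intro b hb
  simp only [Finset.mem_singleton] at hb
  rw [if_neg hb]

lemma s1 : Summable (fun k : ℕ => (1/2:ℂ) * ((-2*a*w)^k / k.factorial)) :=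
  (NormedSpace.expSeries_div_summable (-2*a*w)).mul_left _

lemma s2 : Summable (fun k : ℕ => abar * ((-w)^k / k.factorial)) :=
  (NormedSpace.expSeries_div_summable (-w)).mul_left _

lemma s3 : Summable (fun k : ℕ => (-1:ℂ)^(k+1) * w^k / (k+1).factorial) := by
  refine Summable.of_norm_bounded (g := fun k => ‖w‖^k / k.factorial)
    (Real.summable_pow_div_factorial ‖w‖) (fun k => ?_)
  rw [norm_div, norm_mul, norm_pow, norm_pow, norm_neg, norm_one, one_pow, one_mul,
    RCLike.norm_natCast]
  have h1 : (0:ℝ) < k.factorial := by positivity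
  have h2 : (k.factorial : ℝ) ≤ ((k+1).factorial : ℝ) := by
    exact_mod_cast Nat.factorial_le (Nat.le_succ k)
  exact div_le_div_of_nonneg_left (pow_nonneg (norm_nonneg w) k) h1 h2

lemma ssum : Summable (fun k : ℕ => cc k * w^k) :=
  ((s0.add ((s1 w).add ((s2 w).add (s3 w)))).congr (fun k => (hterm w k).symm))

lemma tsum_f0 : ∑' k : ℕ, (if k = 0 then a else (0:ℂ)) = a := by
  rw [tsum_eq_single 0 (fun b hb => if_neg hb)]; simp

lemma tsum_f3 (hw : w ≠ 0) :
    ∑' k : ℕ, (-1:ℂ)^(k+1) * w^k / (k+1).factorial = w⁻¹ * (Complex.exp (-w) - 1) := by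
  have hshift : Complex.exp (-w) = 1 + ∑' k : ℕ, (-w)^(k+1) / (k+1).factorial := by
    rw [exp_tsum, Summable.tsum_eq_zero_add (NormedSpace.expSeries_div_summable (-w))]
    norm_num
  rw [hshift]
  have : (1 : ℂ) + ∑' k : ℕ, (-w)^(k+1) / (k+1).factorial - 1
      = ∑' k : ℕ, (-w)^(k+1) / (k+1).factorial := by ring
  rw [this, ← tsum_mul_left]
  apply tsum_congr
  intro k
  have h1 : (-w)^(k+1) = (-1:ℂ)^(k+1) * w^(k+1) := by ring
  have hww : w⁻¹ * w = 1 := inv_mul_cancel₀ hw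
  rw [h1, pow_succ]
  linear_combination (-((-1:ℂ)^(k+1) * w^k / ((k+1).factorial))) * hww

lemma tsum_val (hw : w ≠ 0) : ∑' k : ℕ, cc k * w^k
    = a + ((1/2) * Complex.exp (-2*a*w)
      + (abar * Complex.exp (-w) + w⁻¹ * (Complex.exp (-w) - 1))) := by
  calc ∑' k : ℕ, cc k * w^k
      = ∑' k : ℕ, ((if k = 0 then a else 0) + ((1/2:ℂ) * ((-2*a*w)^k / k.factorial)
        + (abar * ((-w)^k / k.factorial) + (-1:ℂ)^(k+1) * w^k / (k+1).factorial))) :=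
        tsum_congr (hterm w)
    _ = a + ((1/2) * Complex.exp (-2*a*w)
        + (abar * Complex.exp (-w) + w⁻¹ * (Complex.exp (-w) - 1))) := by
        rw [Summable.tsum_add s0 ((s1 w).add ((s2 w).add (s3 w))),
          Summable.tsum_add (s1 w) ((s2 w).add (s3 w)), Summable.tsum_add (s2 w) (s3 w),
          tsum_f0, tsum_f3 w hw, tsum_mul_left, tsum_mul_left,
          ← exp_tsum, ← exp_tsum]

lemma S_eq (hw : w ≠ 0) : S w = Complex.exp w * ∑' k : ℕ, cc k * w^k := by
  rw [tsum_val w hw]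
  have e1 : Complex.exp (-2*a*w) = Complex.exp (2*abar*w) * (Complex.exp w)⁻¹ := by
    rw [← Complex.exp_neg, ← Complex.exp_add]
    congr 1
    have hab : a + abar = 1/2 := by unfold a abar; ring
    linear_combination (-2*w) * hab
  unfold S
  rw [if_neg hw, e1, Complex.exp_neg]
  have he := Complex.exp_ne_zero w
  field_simp
  ring

end series

noncomputable def bb (z : ℝ) (k : ℕ) : ℝ :=
  if k ≤ 2 then 0 else (|z|^3 * (32/3)) * (1/4)^k

lemma bb_nonneg (z : ℝ) (k : ℕ) : 0 ≤ bb z k := by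
  unfold bb
  by_cases hk : k ≤ 2
  · rw [if_pos hk]
  · rw [if_neg hk]; positivity

lemma bb_le (z : ℝ) (k : ℕ) : bb z k ≤ (|z|^3 * (32/3)) * (1/4)^k := by
  unfold bb
  by_cases hk : k ≤ 2
  · rw [if_pos hk]; positivity
  · rw [if_neg hk]

lemma bb_summable (z : ℝ) : Summable (bb z) :=
  Summable.of_nonneg_of_le (bb_nonneg z) (bb_le z)
    ((summable_geometric_of_lt_one (by norm_num) (by norm_num)).mul_left _)

lemma bb_tsum_le (z : ℝ) : ∑' k, bb z k ≤ |z|^3 := by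
  rw [← Summable.sum_add_tsum_nat_add 3 (bb_summable z)]
  have hrange : ∑ i ∈ Finset.range 3, bb z i = 0 := by
    rw [Finset.sum_range_succ, Finset.sum_range_succ, Finset.sum_range_one]
    unfold bb
    norm_num
  have hshift : ∀ i : ℕ, bb z (i + 3) = (|z|^3 * (1/6)) * (1/4)^i := by
    intro i
    unfold bb
    rw [if_neg (by omega : ¬ i + 3 ≤ 2)]
    ring
  rw [hrange, tsum_congr hshift, tsum_mul_left,
    tsum_geometric_of_lt_one (by norm_num) (by norm_num)]
  nlinarith [pow_nonneg (abs_nonneg z) 3]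

lemma norm_le_bb (z : ℝ) (h1 : |z| ≤ 1) (k : ℕ) : ‖cc k * (z:ℂ)^k‖ ≤ bb z k := by
  by_cases hk : k ≤ 2
  · interval_cases k <;> simp [cc0, cc1, cc2, bb_nonneg]
  · push_neg at hk
    have hk3 : 3 ≤ k := hk
    unfold bb
    rw [if_neg (by omega : ¬ k ≤ 2), norm_mul, norm_pow]
    have hwz : ‖(z:ℂ)‖ = |z| := by rw [Complex.norm_real, Real.norm_eq_abs]
    have hb1 : ‖cc k‖ ≤ (32/3)*(1/4)^k := le_trans (cc_norm_le k hk3) (fact_geom k hk3)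
    have hb2 : ‖(z:ℂ)‖^k ≤ |z|^3 := by
      rw [hwz]
      exact pow_le_pow_of_le_one (abs_nonneg z) h1 hk3
    calc ‖cc k‖ * ‖(z:ℂ)‖^k ≤ ((32/3)*(1/4)^k) * |z|^3 :=
          mul_le_mul hb1 hb2 (by positivity) (by positivity)
      _ = (|z|^3 * (32/3)) * (1/4)^k := by ring

theorem stmt5 : ∀ z : ℝ, -1 < z → z < 0 →
    ‖S z‖ ≤ |z| ^ 3 * Real.exp z := by
  intro z hz1 hz0
  have hw : (z:ℂ) ≠ 0 := Complex.ofReal_ne_zero.mpr (ne_of_lt hz0)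
  have habs1 : |z| ≤ 1 := abs_le.mpr ⟨by linarith, by linarith⟩
  have hsum_norm : Summable (fun k => ‖cc k * (z:ℂ)^k‖) :=
    Summable.of_nonneg_of_le (fun k => norm_nonneg _) (norm_le_bb z habs1) (bb_summable z)
  have hT : ‖∑' k : ℕ, cc k * (z:ℂ)^k‖ ≤ |z|^3 :=
    calc ‖∑' k : ℕ, cc k * (z:ℂ)^k‖ ≤ ∑' k, ‖cc k * (z:ℂ)^k‖ :=
          norm_tsum_le_tsum_norm hsum_norm
      _ ≤ ∑' k, bb z k := Summable.tsum_le_tsum (norm_le_bb z habs1) hsum_norm (bb_summable z)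
      _ ≤ |z|^3 := bb_tsum_le z
  rw [S_eq (z:ℂ) hw, norm_mul, Complex.norm_exp, Complex.ofReal_re]
  calc Real.exp z * ‖∑' k : ℕ, cc k * (z:ℂ)^k‖ ≤ Real.exp z * |z|^3 :=
        mul_le_mul_of_nonneg_left hT (le_of_lt (Real.exp_pos z))
    _ = |z|^3 * Real.exp z := by ring
end

section
/- Define S(z) = a e^z + (1/2) e^{2āz} + ā - z⁻¹(e^z - 1) with a = (1/4)(1 - i/√3), ā = (1/4)(1 + i/√3). For real z ≤ -1, the real part of S(z) satisfies (Re S(z))² ≤ 6/5. -/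
lemma S_re_eq (z : ℝ) (hz : z ≠ 0) :
    (S z).re = (1/4)*(Real.exp z + 1) + (1/2)*Real.exp (z/2) * Real.cos (z/(2*Real.sqrt 3))
      - (Real.exp z - 1)/z := by
  have hz' : (z:ℂ) ≠ 0 := by exact_mod_cast hz
  rw [S, if_neg hz']
  have h3 : Real.sqrt 3 ≠ 0 := by positivity
  have h2 : (2*abar*(z:ℂ)) = Complex.ofReal (z/2) + Complex.ofReal (z/(2*Real.sqrt 3)) * Complex.I := by
    rw [abar]; push_cast; field_simp; ring
  have ha : a = Complex.ofReal (1/4) - Complex.ofReal (1/(4*Real.sqrt 3)) * Complex.I := by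
    rw [a]; push_cast; field_simp
  have hab : abar = Complex.ofReal (1/4) + Complex.ofReal (1/(4*Real.sqrt 3)) * Complex.I := by
    rw [abar]; push_cast; field_simp
  have hzi : ((z:ℂ))⁻¹ = Complex.ofReal z⁻¹ := by rw [Complex.ofReal_inv]
  rw [h2, Complex.exp_add, Complex.exp_mul_I, ha, hab, hzi,
    ← Complex.ofReal_exp, ← Complex.ofReal_exp, ← Complex.ofReal_cos, ← Complex.ofReal_sin]
  simp only [Complex.add_re, Complex.sub_re, Complex.mul_re, Complex.mul_im,
    Complex.ofReal_re, Complex.ofReal_im, Complex.I_re, Complex.I_im, Complex.one_re,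
    Complex.one_im, Complex.add_im, Complex.sub_im, Complex.div_ofNat_re, Complex.div_ofNat_im]
  field_simp
  ring

theorem stmt8 : ∀ z : ℝ, z ≤ -1 → (S z).re ^ 2 ≤ 6/5 := by
  intro z hz
  rw [S_re_eq z (by linarith)]
  set c := Real.cos (z/(2*Real.sqrt 3)) with hc
  have hzneg : z < 0 := by linarith
  have he1 : Real.exp z ≤ 1/2 := by
    have h0 : Real.exp z ≤ Real.exp (-1) := Real.exp_le_exp.mpr hz
    have h2 : (2:ℝ) ≤ Real.exp 1 := by
      have := Real.add_one_le_exp 1; linarith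
    have h3 : Real.exp (-1) ≤ 1/2 := by
      rw [Real.exp_neg, inv_le_comm₀ (Real.exp_pos 1) (by norm_num)]; linarith
    linarith
  have he0 : 0 < Real.exp z := Real.exp_pos z
  have he2 : Real.exp (z/2) ≤ 2/3 := by
    have h0 : Real.exp (z/2) ≤ Real.exp (-(1/2)) := Real.exp_le_exp.mpr (by linarith)
    have h2 : (3/2:ℝ) ≤ Real.exp (1/2) := by
      have := Real.add_one_le_exp (1/2 : ℝ); linarith
    have h3 : Real.exp (-(1/2)) ≤ 2/3 := by
      rw [Real.exp_neg, inv_le_comm₀ (Real.exp_pos _) (by norm_num)]; linarith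
    linarith
  have he20 : 0 < Real.exp (z/2) := Real.exp_pos _
  have hcb : |c| ≤ 1 := Real.abs_cos_le_one _
  have hcb1 : -1 ≤ c := neg_le_of_abs_le hcb
  have hcb2 : c ≤ 1 := le_of_abs_le hcb
  have hq1 : 0 ≤ (Real.exp z - 1)/z := by
    rw [div_nonneg_iff]; right; constructor <;> nlinarith [Real.add_one_le_exp z]
  have hq2 : (Real.exp z - 1)/z ≤ 1 := by
    rw [div_le_one_of_neg hzneg]
    have := Real.add_one_le_exp z; linarith
  have hb : ((13:ℝ)/12) ^ 2 ≤ 6/5 := by norm_num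
  refine le_trans (sq_le_sq' ?_ ?_) hb <;>
    nlinarith [mul_le_mul_of_nonneg_left hcb2 (le_of_lt he20),
      mul_le_mul_of_nonneg_left hcb1 (le_of_lt he20)]
end

section
/- Define S(z) = a e^z + (1/2) e^{2āz} + ā - z⁻¹(e^z - 1) with a = (1/4)(1 - i/√3), ā = (1/4)(1 + i/√3). For real z ≤ -1, the imaginary part satisfies (Im S(z))² ≤ 3/10. -/
lemma im_S (z : ℝ) (hz : (z:ℂ) ≠ 0) :
    (S z).im = (1 - Real.exp z)/(4*Real.sqrt 3)
      + (1/2) * Real.exp (z/2) * Real.sin (z/(2*Real.sqrt 3)) := by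
  have hs : (0:ℝ) < Real.sqrt 3 := by positivity
  have h3 : (Real.sqrt 3)⁻¹ = Real.sqrt 3 / 3 := by
    rw [eq_div_iff (by norm_num), inv_mul_eq_div, div_eq_iff hs.ne']
    nlinarith [Real.sq_sqrt (by norm_num : (3:ℝ) ≥ 0)]
  rw [S, if_neg hz]
  simp [a, abar, Complex.exp_im, Complex.exp_re, Complex.add_im, Complex.mul_im,
    Complex.mul_re, Complex.div_im, Complex.div_re, Complex.ext_iff,
    ← Complex.ofReal_exp, ← Complex.ofReal_inv]
  have hsq : Real.sqrt 3 * Real.sqrt 3 = 3 := Real.mul_self_sqrt (by norm_num)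
  have harg : z / (2*Real.sqrt 3) = 2*(4⁻¹*(Real.sqrt 3/3))*z := by
    rw [div_eq_iff (by positivity : (2*Real.sqrt 3) ≠ 0)]
    linear_combination (-z/3)*hsq
  have h4 : (1 - Real.exp z)/(4*Real.sqrt 3) = 4⁻¹*(Real.sqrt 3/3)*(1-Real.exp z) := by
    rw [div_eq_iff (by positivity : (4*Real.sqrt 3) ≠ 0)]
    linear_combination (-(1-Real.exp z)/3)*hsq
  have he : (2:ℝ)*4⁻¹*z = z/2 := by ring
  rw [harg, h4, he]
  ring

theorem stmt9 : ∀ z : ℝ, z ≤ -1 → (S z).im ^ 2 ≤ 3/10 := by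
  intro z hz
  have hz0 : (z:ℂ) ≠ 0 := Complex.ofReal_ne_zero.mpr (by linarith)
  rw [im_S z hz0]
  set s := Real.sqrt 3 with hsdef
  have hs0 : (0:ℝ) < s := by positivity
  have hsq3 : s * s = 3 := Real.mul_self_sqrt (by norm_num)
  have hs17 : (1.7:ℝ) ≤ s := by nlinarith
  -- exponential bounds
  have he1 : Real.exp z ≤ Real.exp (-1) := Real.exp_le_exp.mpr hz
  have hepos : (0:ℝ) < Real.exp z := Real.exp_pos z
  have hone : Real.exp (-1) ≤ 0.38 := by
    rw [Real.exp_neg]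
    have h1 : (2.7:ℝ) ≤ Real.exp 1 := by
      have := Real.exp_one_gt_d9
      linarith
    rw [inv_le_comm₀ (by positivity) (by norm_num)]
    linarith
  have hhalf : Real.exp (z/2) ≤ Real.exp (-(1/2)) := Real.exp_le_exp.mpr (by linarith)
  have hhpos : (0:ℝ) < Real.exp (z/2) := Real.exp_pos _
  have hhsq : Real.exp (-(1/2)) * Real.exp (-(1/2)) = Real.exp (-1) := by
    rw [← Real.exp_add]; norm_num
  have hhb : Real.exp (-(1/2)) ≤ 0.62 := by nlinarith [Real.exp_pos (-(1/2:ℝ))]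
  -- first term bounds
  have hE1a : (0:ℝ) ≤ (1 - Real.exp z)/(4*s) := by
    apply div_nonneg _ (by positivity)
    linarith
  have hE1b : (1 - Real.exp z)/(4*s) ≤ 0.15 := by
    rw [div_le_iff₀ (by positivity)]
    nlinarith
  -- second term bounds
  have hsin1 : Real.sin (z/(2*s)) ≤ 1 := Real.sin_le_one _
  have hsin2 : -1 ≤ Real.sin (z/(2*s)) := Real.neg_one_le_sin _
  have heb : Real.exp (z/2) ≤ 0.62 := le_trans hhalf hhb
  have hE2a : (1/2) * Real.exp (z/2) * Real.sin (z/(2*s)) ≤ 0.31 := by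
    nlinarith [mul_nonneg hhpos.le (sub_nonneg.mpr hsin1)]
  have hE2b : -0.31 ≤ (1/2) * Real.exp (z/2) * Real.sin (z/(2*s)) := by
    nlinarith [mul_nonneg hhpos.le (sub_nonneg.mpr (neg_le_iff_add_nonneg.mp hsin2))]
  nlinarith [hE1a, hE1b, hE2a, hE2b]
end

section
/- Let A be a self-adjoint operator with eigenvalues λ_j ≤ 0 on a separable Hilbert space, v ∈ D(A²), and S(z) = a e^z + (1/2)e^{2āz} + ā - z⁻¹(e^z - 1) with a = (1/4)(1 - i/√3). Assume the parabolic smoothing bound ‖A e^{τA}‖ ≤ C/τ. Then ‖S(τA) v‖ ≤ C' τ² ‖A² v‖ for all τ > 0 small, with C' independent of τ and v. -/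
lemma sqrt3_ne : (Real.sqrt 3 : ℂ) ≠ 0 := by norm_cast; positivity
lemma sqrt3_sq : (Real.sqrt 3 : ℂ)^2 = 3 := by norm_cast; exact Real.sq_sqrt (by norm_num)
lemma ha : a + abar = 1/2 := by unfold a abar; ring
lemma hb : a/2 + abar^2 = 1/6 := by
  unfold a abar
  have h := sqrt3_ne
  field_simp
  linear_combination 12*Complex.I_sq + 4*sqrt3_sq

lemma mySeq (z : ℂ) (hz : z ≠ 0) :
    S z = (1/6)*z^2 + a*(Complex.exp z - (1 + z + z^2/2))
      + (1/2)*(Complex.exp (2*abar*z) - (1 + 2*abar*z + (2*abar*z)^2/2))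
      - z⁻¹*(Complex.exp z - (1 + z + z^2/2)) := by
  unfold S
  rw [if_neg hz]
  have hinv : z⁻¹ * z = 1 := inv_mul_cancel₀ hz
  linear_combination (1+z)*ha + z^2*hb - (1+z/2)*hinv

lemma sqrt3_ge1 : (1:ℝ) ≤ Real.sqrt 3 := by
  rw [show (1:ℝ) = Real.sqrt 1 by simp]
  exact Real.sqrt_le_sqrt (by norm_num)

lemma abs_a : ‖a‖ ≤ 1 := by
  have h := sqrt3_ge1
  have h3 : ‖(Real.sqrt 3 : ℂ)‖ = Real.sqrt 3 := by
    rw [Complex.norm_real, Real.norm_eq_abs, abs_of_nonneg (Real.sqrt_nonneg 3)]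
  unfold a
  calc ‖((1/4:ℂ) * (1 - Complex.I / Real.sqrt 3))‖
      ≤ ‖(1/4:ℂ)‖ * (‖(1:ℂ)‖ + ‖(Complex.I / Real.sqrt 3)‖) := by
        rw [norm_mul]
        gcongr
        exact (norm_sub_le _ _)
    _ ≤ 1 := by
        simp only [norm_div, Complex.norm_I, h3, norm_one, Complex.norm_ofNat]
        have h2 : 1 / Real.sqrt 3 ≤ 1 := by
          rw [div_le_one (by linarith)]; exact h
        nlinarith

lemma abs_abar : ‖abar‖ ≤ 1 := by
  have h := sqrt3_ge1
  have h3 : ‖(Real.sqrt 3 : ℂ)‖ = Real.sqrt 3 := by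
    rw [Complex.norm_real, Real.norm_eq_abs, abs_of_nonneg (Real.sqrt_nonneg 3)]
  unfold abar
  calc ‖((1/4:ℂ) * (1 + Complex.I / Real.sqrt 3))‖
      ≤ ‖(1/4:ℂ)‖ * (‖(1:ℂ)‖ + ‖(Complex.I / Real.sqrt 3)‖) := by
        rw [norm_mul]
        gcongr
        exact (norm_add_le _ _)
    _ ≤ 1 := by
        simp only [norm_div, Complex.norm_I, h3, norm_one, Complex.norm_ofNat]
        have h2 : 1 / Real.sqrt 3 ≤ 1 := by
          rw [div_le_one (by linarith)]; exact h
        nlinarith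

lemma abs_2abar : ‖(2*abar)‖ ≤ 1 := by
  have h := sqrt3_ge1
  have h3 : ‖(Real.sqrt 3 : ℂ)‖ = Real.sqrt 3 := by
    rw [Complex.norm_real, Real.norm_eq_abs, abs_of_nonneg (Real.sqrt_nonneg 3)]
  have : (2:ℂ)*abar = (1/2) * (1 + Complex.I / Real.sqrt 3) := by unfold abar; ring
  rw [this]
  calc ‖((1/2:ℂ) * (1 + Complex.I / Real.sqrt 3))‖
      ≤ ‖(1/2:ℂ)‖ * (‖(1:ℂ)‖ + ‖(Complex.I / Real.sqrt 3)‖) := by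
        rw [norm_mul]; gcongr; exact (norm_add_le _ _)
    _ ≤ 1 := by
        simp only [norm_div, Complex.norm_I, h3, norm_one, Complex.norm_ofNat]
        have h2 : 1 / Real.sqrt 3 ≤ 1 := by
          rw [div_le_one (by linarith)]; exact h
        nlinarith

lemma sum_range3 (w : ℂ) : ∑ m ∈ Finset.range 3, w^m / m.factorial = 1 + w + w^2/2 := by
  simp [Finset.sum_range_succ, Nat.factorial]

lemma key (x : ℝ) (hx : x ≤ 0) : ‖(S x)‖ ≤ 5 * x^2 := by
  rcases eq_or_lt_of_le hx with h0 | hneg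
  · rw [h0]
    simp [S]
  · have hz : (x:ℂ) ≠ 0 := Complex.ofReal_ne_zero.mpr hneg.ne
    have habsx : ‖(x:ℂ)‖ = |x| := by rw [Complex.norm_real, Real.norm_eq_abs]
    set y := |x| with hy
    have hy0 : 0 < y := abs_pos.mpr hneg.ne
    have hyx : y^2 = x^2 := sq_abs x
    by_cases hge : -1 ≤ x
    · -- |x| ≤ 1
      have hy1 : y ≤ 1 := abs_le.mpr ⟨hge, by linarith⟩
      have h1 : ‖(x:ℂ)‖ ≤ 1 := by rw [habsx]; exact hy1
      have hw1 : ‖(2*abar*(x:ℂ))‖ ≤ 1 := by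
        rw [norm_mul]
        calc ‖(2*abar)‖ * ‖(x:ℂ)‖ ≤ 1 * 1 :=
          mul_le_mul abs_2abar h1 (norm_nonneg _) one_pos.le
        _ = 1 := by ring
      have e1 := Complex.exp_bound h1 (by norm_num : 0 < 3)
      have e2 := Complex.exp_bound hw1 (by norm_num : 0 < 3)
      rw [sum_range3] at e1 e2
      norm_num [Nat.factorial] at e1 e2
      have e2' : ‖(Complex.exp (2*abar*(x:ℂ)) -
          (1 + 2*abar*(x:ℂ) + (2*abar*(x:ℂ))^2/2))‖ ≤ y^3 * (2/9) := by
        refine e2.trans ?_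
        have h2a : 2 * ‖abar‖ ≤ 1 := by
          have h := abs_2abar
          rwa [norm_mul, Complex.norm_two] at h
        have hwle : 2 * ‖abar‖ * |x| ≤ y := by
          rw [hy]
          nlinarith [abs_nonneg x, norm_nonneg abar]
        have := pow_le_pow_left₀ (by positivity : (0:ℝ) ≤ 2 * ‖abar‖ * |x|) hwle 3
        nlinarith
      rw [mySeq _ hz]
      set z : ℂ := (x:ℂ)
      set R1 := Complex.exp z - (1 + z + z^2/2)
      set R2 := Complex.exp (2*abar*z) - (1 + 2*abar*z + (2*abar*z)^2/2)
      have t0 : ‖((1/6)*z^2 + a*R1 + (1/2)*R2 - z⁻¹*R1)‖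
          ≤ ‖((1/6)*z^2)‖ + ‖(a*R1)‖ + ‖((1/2)*R2)‖
            + ‖(z⁻¹*R1)‖ := by
        have u1 := norm_sub_le ((1/6)*z^2 + a*R1 + (1/2)*R2) (z⁻¹*R1)
        have u2 := norm_add_le ((1/6)*z^2 + a*R1) ((1/2)*R2)
        have u3 := norm_add_le ((1/6)*z^2) (a*R1)
        linarith
      refine t0.trans ?_
      have b1 : ‖((1/6:ℂ)*z^2)‖ = (1/6)*y^2 := by
        rw [norm_mul, norm_pow, habsx]
        norm_num
      have b2 : ‖(a*R1)‖ ≤ y^3 * (2/9) := by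
        rw [norm_mul]
        calc ‖a‖ * ‖R1‖ ≤ 1 * (y^3*(2/9)) :=
          mul_le_mul abs_a e1 (norm_nonneg _) one_pos.le
        _ = y^3*(2/9) := by ring
      have b3 : ‖((1/2:ℂ)*R2)‖ ≤ (1/2) * (y^3*(2/9)) := by
        rw [norm_mul]
        have : ‖(1/2:ℂ)‖ = 1/2 := by
          simp [norm_div, Complex.norm_ofNat]
        rw [this]
        exact mul_le_mul_of_nonneg_left e2' (by norm_num)
      have b4 : ‖(z⁻¹*R1)‖ ≤ y^2 * (2/9) := by
        rw [norm_mul, norm_inv, habsx]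
        have : y⁻¹ * (y^3*(2/9)) = y^2 * (2/9) := by
          field_simp
        calc y⁻¹ * ‖R1‖ ≤ y⁻¹ * (y^3*(2/9)) :=
          mul_le_mul_of_nonneg_left e1 (by positivity)
        _ = y^2*(2/9) := this
      have hy3 : y^3 ≤ y^2 := by nlinarith
      rw [b1]
      nlinarith
    · -- x < -1
      push_neg at hge
      have hy1 : 1 ≤ y := by rw [hy, abs_of_neg hneg]; linarith
      unfold S
      rw [if_neg hz]
      have hexp : ‖(Complex.exp (x:ℂ))‖ ≤ 1 := by
        rw [Complex.norm_exp, Complex.ofReal_re]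
        exact Real.exp_le_one_iff.mpr hx
      have hre : (2*abar*(x:ℂ)).re = x/2 := by
        have h3 : (Real.sqrt 3) ≠ 0 := by positivity
        have h3' : Real.sqrt 3 * Real.sqrt 3 = 3 := Real.mul_self_sqrt (by norm_num)
        simp [abar, Complex.mul_re, Complex.mul_im, Complex.div_re, Complex.div_im,
          Complex.normSq, Complex.ofReal_re, Complex.ofReal_im]
        field_simp
        ring
      have hexp2 : ‖(Complex.exp (2*abar*(x:ℂ)))‖ ≤ 1 := by
        rw [Complex.norm_exp, hre]
        exact Real.exp_le_one_iff.mpr (by linarith)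
      have t0 : ‖(a * Complex.exp (x:ℂ) + (1/2) * Complex.exp (2*abar*(x:ℂ))
            + abar - (x:ℂ)⁻¹ * (Complex.exp (x:ℂ) - 1))‖
          ≤ ‖(a * Complex.exp (x:ℂ))‖ + ‖((1/2) * Complex.exp (2*abar*(x:ℂ)))‖
            + ‖abar‖ + ‖((x:ℂ)⁻¹ * (Complex.exp (x:ℂ) - 1))‖ := by
        have u1 := norm_sub_le (a * Complex.exp (x:ℂ)
          + (1/2) * Complex.exp (2*abar*(x:ℂ)) + abar) ((x:ℂ)⁻¹ * (Complex.exp (x:ℂ) - 1))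
        have u2 := norm_add_le (a * Complex.exp (x:ℂ)
          + (1/2) * Complex.exp (2*abar*(x:ℂ))) abar
        have u3 := norm_add_le (a * Complex.exp (x:ℂ))
          ((1/2) * Complex.exp (2*abar*(x:ℂ)))
        linarith
      refine t0.trans ?_
      have b1 : ‖(a * Complex.exp (x:ℂ))‖ ≤ 1 := by
        rw [norm_mul]
        calc ‖a‖ * ‖(Complex.exp (x:ℂ))‖ ≤ 1*1 :=
          mul_le_mul abs_a hexp (norm_nonneg _) one_pos.le
        _ = 1 := by ring
      have b2 : ‖((1/2:ℂ) * Complex.exp (2*abar*(x:ℂ)))‖ ≤ 1/2 := by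
        rw [norm_mul]
        have h12 : ‖(1/2:ℂ)‖ = 1/2 := by simp [norm_div, Complex.norm_ofNat]
        rw [h12]
        nlinarith [norm_nonneg (Complex.exp (2*abar*(x:ℂ)))]
      have b4 : ‖((x:ℂ)⁻¹ * (Complex.exp (x:ℂ) - 1))‖ ≤ 2 := by
        rw [norm_mul, norm_inv, habsx]
        have hsub : ‖(Complex.exp (x:ℂ) - 1)‖ ≤ 2 := by
          have h₁ := norm_sub_le (Complex.exp (x:ℂ)) 1
          rw [norm_one] at h₁
          linarith
        have hinv : y⁻¹ ≤ 1 := by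
          rw [inv_le_one_iff₀]; right; exact hy1
        calc y⁻¹ * ‖(Complex.exp (x:ℂ) - 1)‖ ≤ 1 * 2 :=
          mul_le_mul hinv hsub (norm_nonneg _) one_pos.le
        _ = 2 := by ring
      have hx2 : 1 ≤ x^2 := by nlinarith
      linarith [abs_abar]

/-- Diagonal formulation: `A` self-adjoint with eigenvalues `lam j ≤ 0`, vectors
identified with their coefficient sequences; `S(τA)` acts diagonally by
multiplication by `S(τ lam_j)`. The parabolic smoothing bound
`‖A e^{τA}‖ ≤ C/τ` reads `|lam j| e^{τ lam j} ≤ C/τ`. -/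
theorem stmt15 (lam : ℕ → ℝ) (hlam : ∀ j, lam j ≤ 0)
    (C : ℝ) (hC : 0 < C)
    (hsm : ∀ τ : ℝ, 0 < τ → ∀ j, |lam j| * Real.exp (τ * lam j) ≤ C / τ) :
    ∃ C' : ℝ, 0 < C' ∧ ∃ τ₀ : ℝ, 0 < τ₀ ∧
      ∀ (τ : ℝ), 0 < τ → τ ≤ τ₀ → ∀ v : ℕ → ℂ,
        Summable (fun j => ‖((lam j : ℂ)) ^ 2 * v j‖ ^ 2) →
        Real.sqrt (∑' j, ‖S (τ * lam j) * v j‖ ^ 2)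
          ≤ C' * τ ^ 2 * Real.sqrt (∑' j, ‖((lam j : ℂ)) ^ 2 * v j‖ ^ 2) := by
  refine ⟨5, by norm_num, 1, one_pos, ?_⟩
  intro τ hτ hτ1 v hv
  have hpt : ∀ j, ‖S (τ * lam j) * v j‖^2 ≤ (5*τ^2)^2 * ‖((lam j:ℂ))^2 * v j‖^2 := by
    intro j
    have h0 : τ * lam j ≤ 0 := by
      have := mul_nonneg hτ.le (neg_nonneg.mpr (hlam j))
      linarith
    have h1 : ‖S ((τ * lam j : ℝ) : ℂ)‖ ≤ 5*(τ*lam j)^2 := by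
      exact key (τ * lam j) h0
    have h1sq : ‖S ((τ * lam j : ℝ) : ℂ)‖^2 ≤ (5*(τ*lam j)^2)^2 := by
      nlinarith [norm_nonneg (S ((τ * lam j : ℝ) : ℂ))]
    have h2 : ‖((lam j:ℂ))^2‖ = (lam j)^2 := by
      rw [norm_pow, Complex.norm_real, Real.norm_eq_abs, sq_abs]
    have hcast : ((τ * lam j : ℝ) : ℂ) = (τ:ℂ) * (lam j:ℂ) := by push_cast; ring
    rw [← hcast, norm_mul, norm_mul, mul_pow, mul_pow, h2]
    nlinarith [mul_le_mul_of_nonneg_right h1sq (sq_nonneg (‖v j‖)), sq_nonneg (‖v j‖)]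
  have hsumR : Summable (fun j => (5*τ^2)^2 * ‖((lam j:ℂ))^2 * v j‖^2) := hv.mul_left _
  have hsumL : Summable (fun j => ‖S (τ * lam j) * v j‖^2) :=
    Summable.of_nonneg_of_le (fun j => by positivity) hpt hsumR
  have hts := Summable.tsum_le_tsum hpt hsumL hsumR
  calc Real.sqrt (∑' j, ‖S (τ * lam j) * v j‖^2)
      ≤ Real.sqrt (∑' j, (5*τ^2)^2 * ‖((lam j:ℂ))^2 * v j‖^2) := Real.sqrt_le_sqrt hts
    _ = 5 * τ^2 * Real.sqrt (∑' j, ‖((lam j:ℂ))^2 * v j‖^2) := by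
        rw [tsum_mul_left, Real.sqrt_mul (by positivity) _,
          Real.sqrt_sq (by positivity : (0:ℝ) ≤ 5*τ^2)]
end

section
/- Let A be self-adjoint with eigenvalues λ_j ≤ -μ < 0 satisfying ‖A e^{tA}‖ ≤ C/t for t > 0 (parabolic smoothing). Let δ_{k+1} = A w_{k+1} with ‖w_{k+1}‖ ≤ K τ⁴ and also ‖δ_{k+1}‖ ≤ K τ³ for all k. Then for nτ ≤ T, ‖∑_{k=0}^{n-1} e^{(n-k-1)τA} δ_{k+1}‖ ≤ C' τ³ (1 + |log τ|) for τ small, with C' independent of n and τ. -/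
/-- Global error accumulation. `P m` plays the role of `e^{mτA}` (so `P 0 = I`),
`A` of the generator, and the parabolic smoothing bound `‖A e^{tA}‖ ≤ C/t` at
`t = mτ` reads `‖(P m).comp A‖ ≤ C/(mτ)`. The constant `C'` depends only on
`T`, `C` and `K`, not on `n` or `τ`. -/
theorem stmt18 {H : Type*} [NormedAddCommGroup H] [InnerProductSpace ℂ H]
    (T C K : ℝ) (hT : 0 < T) (hC : 0 < C) (hK : 0 < K) :
    ∃ C' : ℝ, 0 < C' ∧
      ∀ (τ : ℝ) (n : ℕ) (A : H →L[ℂ] H) (P : ℕ → H →L[ℂ] H) (δ w : ℕ → H),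
        0 < τ → τ ≤ 1 → (n : ℝ) * τ ≤ T →
        P 0 = 1 →
        (∀ m : ℕ, 1 ≤ m → ‖(P m).comp A‖ ≤ C / (m * τ)) →
        (∀ k : ℕ, δ (k + 1) = A (w (k + 1))) →
        (∀ k : ℕ, ‖w (k + 1)‖ ≤ K * τ ^ 4) →
        (∀ k : ℕ, ‖δ (k + 1)‖ ≤ K * τ ^ 3) →
        ‖∑ k ∈ Finset.range n, P (n - k - 1) (δ (k + 1))‖
          ≤ C' * τ ^ 3 * (1 + |Real.log τ|) := by
  refine ⟨K + C * K * (2 + |Real.log T|), by positivity, ?_⟩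
  intro τ n A P δ w hτ hτ1 hnT hP0 hPA hδA hw hδ
  have hτ3 : (0:ℝ) < τ ^ 3 := by positivity
  have hlogτ : (0:ℝ) ≤ |Real.log τ| := abs_nonneg _
  have hlogT : (0:ℝ) ≤ |Real.log T| := abs_nonneg _
  obtain rfl | ⟨m, rfl⟩ : n = 0 ∨ ∃ m, n = m + 1 :=
    (Nat.eq_zero_or_pos n).imp id (fun h => ⟨n - 1, (Nat.succ_pred_eq_of_pos h).symm⟩)
  · simp only [Finset.range_zero, Finset.sum_empty, norm_zero]
    have h1 : (0:ℝ) ≤ K + C * K * (2 + |Real.log T|) := by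
      nlinarith [mul_pos hC hK, abs_nonneg (Real.log T)]
    have h2 : (0:ℝ) ≤ 1 + |Real.log τ| := by linarith [abs_nonneg (Real.log τ)]
    exact mul_nonneg (mul_nonneg h1 hτ3.le) h2
  -- bound log m
  have hm_le : (m : ℝ) * τ ≤ T := by
    have : (m:ℝ) ≤ (m+1:ℕ) := by push_cast; linarith
    nlinarith [hnT]
  have hlogm : Real.log m ≤ |Real.log T| + |Real.log τ| := by
    rcases Nat.eq_zero_or_pos m with rfl | hm
    · simp only [Nat.cast_zero, Real.log_zero]
      exact add_nonneg hlogT hlogτ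
    · have hmpos : (0:ℝ) < m := by exact_mod_cast hm
      have h1 : (m:ℝ) ≤ T / τ := (le_div_iff₀ hτ).mpr hm_le
      have h2 : Real.log m ≤ Real.log (T / τ) := Real.log_le_log hmpos h1
      rw [Real.log_div (ne_of_gt hT) (ne_of_gt hτ)] at h2
      calc Real.log m ≤ Real.log T - Real.log τ := h2
        _ ≤ |Real.log T| + |Real.log τ| := by
            have := le_abs_self (Real.log T)
            have := neg_le_abs (Real.log τ)
            linarith
  -- harmonic sum bound
  have hharm : ∑ k ∈ Finset.range m, ((m - k : ℕ) : ℝ)⁻¹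
      ≤ 1 + |Real.log T| + |Real.log τ| := by
    have hre : ∑ k ∈ Finset.range m, ((m - k : ℕ) : ℝ)⁻¹
        = ∑ k ∈ Finset.range m, ((k + 1 : ℕ) : ℝ)⁻¹ := by
      rw [← Finset.sum_range_reflect]
      apply Finset.sum_congr rfl
      intro k hk
      have hk' : k < m := Finset.mem_range.mp hk
      congr 2
      omega
    have hH : ∑ k ∈ Finset.range m, ((k + 1 : ℕ) : ℝ)⁻¹ = (harmonic m : ℝ) := by
      rw [harmonic_eq_sum_Icc, Rat.cast_sum, ← Finset.Ico_add_one_right_eq_Icc,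
        Finset.sum_Ico_eq_sum_range]
      apply Finset.sum_congr (by norm_num)
      intro k hk
      push_cast
      rw [add_comm]
    rw [hre, hH]
    have := harmonic_le_one_add_log m
    have := hlogm
    linarith
  -- split the sum
  rw [Finset.sum_range_succ]
  have hlast : ‖P (m + 1 - m - 1) (δ (m + 1))‖ ≤ K * τ ^ 3 := by
    have : m + 1 - m - 1 = 0 := by omega
    rw [this, hP0]
    simpa using hδ m
  have hterm : ∀ k ∈ Finset.range m,
      ‖P (m + 1 - k - 1) (δ (k + 1))‖ ≤ C * K * τ ^ 3 * ((m - k : ℕ) : ℝ)⁻¹ := by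
    intro k hk
    have hk' : k < m := Finset.mem_range.mp hk
    have hmk : m + 1 - k - 1 = m - k := by omega
    have hmk1 : 1 ≤ m - k := by omega
    have hmkpos : (0:ℝ) < ((m - k : ℕ) : ℝ) := by
      exact_mod_cast Nat.lt_of_lt_of_le Nat.zero_lt_one hmk1
    rw [hmk, hδA k]
    calc ‖P (m - k) (A (w (k + 1)))‖
        = ‖(P (m - k)).comp A (w (k + 1))‖ := rfl
      _ ≤ ‖(P (m - k)).comp A‖ * ‖w (k + 1)‖ := (P (m - k)).comp A |>.le_opNorm _
      _ ≤ (C / ((m - k : ℕ) * τ)) * (K * τ ^ 4) := by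
          apply mul_le_mul (hPA _ hmk1) (hw k) (norm_nonneg _)
          positivity
      _ = C * K * τ ^ 3 * ((m - k : ℕ) : ℝ)⁻¹ := by
          field_simp
  have hsum : ‖∑ k ∈ Finset.range m, P (m + 1 - k - 1) (δ (k + 1))‖
      ≤ C * K * τ ^ 3 * (1 + |Real.log T| + |Real.log τ|) := by
    calc ‖∑ k ∈ Finset.range m, P (m + 1 - k - 1) (δ (k + 1))‖
        ≤ ∑ k ∈ Finset.range m, ‖P (m + 1 - k - 1) (δ (k + 1))‖ :=
          norm_sum_le _ _
      _ ≤ ∑ k ∈ Finset.range m, C * K * τ ^ 3 * ((m - k : ℕ) : ℝ)⁻¹ :=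
          Finset.sum_le_sum hterm
      _ = C * K * τ ^ 3 * ∑ k ∈ Finset.range m, ((m - k : ℕ) : ℝ)⁻¹ := by
          rw [Finset.mul_sum]
      _ ≤ C * K * τ ^ 3 * (1 + |Real.log T| + |Real.log τ|) := by
          apply mul_le_mul_of_nonneg_left hharm
          positivity
  calc ‖∑ k ∈ Finset.range m, P (m + 1 - k - 1) (δ (k + 1)) + P (m + 1 - m - 1) (δ (m + 1))‖
      ≤ ‖∑ k ∈ Finset.range m, P (m + 1 - k - 1) (δ (k + 1))‖ + ‖P (m + 1 - m - 1) (δ (m + 1))‖ :=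
        norm_add_le _ _
    _ ≤ C * K * τ ^ 3 * (1 + |Real.log T| + |Real.log τ|) + K * τ ^ 3 := by linarith
    _ ≤ (K + C * K * (2 + |Real.log T|)) * τ ^ 3 * (1 + |Real.log τ|) := by
        nlinarith [mul_nonneg (mul_nonneg (mul_pos hC hK).le hτ3.le) hlogτ,
          mul_nonneg (mul_nonneg (mul_nonneg (mul_pos hC hK).le hτ3.le) hlogT) hlogτ,
          mul_nonneg (mul_nonneg hK.le hτ3.le) hlogτ,
          (mul_pos (mul_pos hC hK) hτ3)]
end
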